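/- Let L_1 and L_2 be layers on n channels with L_1 maximal, and let π be a permutation of {1,…,n} such that π(L_1) = L_1 and π(L_2) is a layer (i.e., π(i) < π(j) for every (i,j) ∈ L_2). Then there is a sorting network of depth d of the form L_1;L_2;C for some comparator network C if and only if there is a sorting network of depth d of the form L_1;π(L_2);C' for some comparator network C'. -/

import Mathlib

namespace SN

open scoped Classical

/-- A comparator on `n` channels: a pair of channels. -/
abbrev Comp (n : ℕ) := Fin n × Fin n

/-- A layer is a finite set of comparators. -/
abbrev Layer (n : ℕ) := Finset (Comp n)

/-- A comparator network is a sequence (list) of layers; its depth is the length. -/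
abbrev Net (n : ℕ) := List (Layer n)

/-- Each channel is used by at most one comparator of the layer. -/
def NoOverlap {n : ℕ} (L : Layer n) : Prop :=
  ∀ c ∈ L, ∀ c' ∈ L, c ≠ c' →
    c.1 ≠ c'.1 ∧ c.1 ≠ c'.2 ∧ c.2 ≠ c'.1 ∧ c.2 ≠ c'.2

/-- A (standard) layer: comparators `(i,j)` with `i < j`, channels pairwise disjoint. -/
def IsLayer {n : ℕ} (L : Layer n) : Prop :=
  (∀ c ∈ L, c.1 < c.2) ∧ NoOverlap L

/-- A generalized layer: comparators `(i,j)` with `i ≠ j` allowed in any order. -/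
def IsGenLayer {n : ℕ} (L : Layer n) : Prop :=
  (∀ c ∈ L, c.1 ≠ c.2) ∧ NoOverlap L

def IsNet {n : ℕ} (C : Net n) : Prop := ∀ L ∈ C, IsLayer L

def IsGenNet {n : ℕ} (C : Net n) : Prop := ∀ L ∈ C, IsGenLayer L

/-- Apply one layer to a Boolean vector: a comparator `(i,j)` puts the min
(`&&`) on channel `i` and the max (`||`) on channel `j`. -/
noncomputable def applyLayer {n : ℕ} (L : Layer n) (x : Fin n → Bool) : Fin n → Bool :=
  fun k =>
    if h1 : ∃ c ∈ L, c.1 = k then x h1.choose.1 && x h1.choose.2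
    else if h2 : ∃ c ∈ L, c.2 = k then x h2.choose.1 || x h2.choose.2
    else x k

/-- Run a comparator network on a Boolean input (layers applied in sequence). -/
noncomputable def run {n : ℕ} (C : Net n) (x : Fin n → Bool) : Fin n → Bool :=
  C.foldl (fun y L => applyLayer L y) x

/-- Ascendingly sorted Boolean vector. -/
def BSorted {n : ℕ} (x : Fin n → Bool) : Prop :=
  ∀ i j : Fin n, i ≤ j → x i ≤ x j

/-- A sorting network: a comparator network sorting every Boolean input. -/
def IsSortingNet {n : ℕ} (C : Net n) : Prop :=
  IsNet C ∧ ∀ x : Fin n → Bool, BSorted (run C x)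

/-- The set of outputs of a network on all Boolean inputs. -/
def outputs {n : ℕ} (C : Net n) : Set (Fin n → Bool) := Set.range (run C)

/-- Apply one layer to a vector of naturals. -/
noncomputable def applyLayerN {n : ℕ} (L : Layer n) (x : Fin n → ℕ) : Fin n → ℕ :=
  fun k =>
    if h1 : ∃ c ∈ L, c.1 = k then min (x h1.choose.1) (x h1.choose.2)
    else if h2 : ∃ c ∈ L, c.2 = k then max (x h2.choose.1) (x h2.choose.2)
    else x k

noncomputable def runN {n : ℕ} (C : Net n) (x : Fin n → ℕ) : Fin n → ℕ :=
  C.foldl (fun y L => applyLayerN L y) x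

def NSorted {n : ℕ} (x : Fin n → ℕ) : Prop :=
  ∀ i j : Fin n, i ≤ j → x i ≤ x j

/-- Permute the coordinates of a Boolean vector by `π` (channel `k`'s value
moves to channel `π k`). -/
def permVec {n : ℕ} (π : Equiv.Perm (Fin n)) (x : Fin n → Bool) : Fin n → Bool :=
  fun i => x (π.symm i)

/-- The image of a set of Boolean vectors under coordinate permutation by `π`. -/
def permSet {n : ℕ} (π : Equiv.Perm (Fin n)) (X : Set (Fin n → Bool)) :
    Set (Fin n → Bool) :=
  permVec π '' X

/-- The image `π(L)` of a layer under a permutation of channels. -/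
def permLayer {n : ℕ} (π : Equiv.Perm (Fin n)) (L : Layer n) : Layer n :=
  L.image fun c => (π c.1, π c.2)

/-- Channel `i` is used by some comparator of the layer `L`. -/
def usedIn {n : ℕ} (L : Layer n) (i : Fin n) : Prop := ∃ c ∈ L, c.1 = i ∨ c.2 = i

/-- Channels `i` and `j` are joined by a comparator of `L`. -/
def Joined {n : ℕ} (L : Layer n) (i j : Fin n) : Prop := (i, j) ∈ L ∨ (j, i) ∈ L

/-- `i` is the smaller channel of some comparator of `L` (a min-channel). -/
def MinChan {n : ℕ} (L : Layer n) (i : Fin n) : Prop := ∃ c ∈ L, c.1 = i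

/-- `i` is the larger channel of some comparator of `L` (a max-channel). -/
def MaxChan {n : ℕ} (L : Layer n) (i : Fin n) : Prop := ∃ c ∈ L, c.2 = i

/-- A two-layer network `[L1, L2]` is redundant if some comparator can be removed
so that the outputs of the result are a permutation of the original outputs. -/
def Redundant {n : ℕ} (L1 L2 : Layer n) : Prop :=
  ∃ π : Equiv.Perm (Fin n),
    (∃ c ∈ L1, outputs [L1.erase c, L2] = permSet π (outputs [L1, L2])) ∨
    (∃ c ∈ L2, outputs [L1, L2.erase c] = permSet π (outputs [L1, L2]))

/-- A two-layer network `[L1, L2]` is saturated if it is non-redundant and no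
comparator on two channels unused in the second layer can be added to the second
layer so as to make the output set a proper subset of a permutation of the
original output set. -/
def Saturated {n : ℕ} (L1 L2 : Layer n) : Prop :=
  ¬ Redundant L1 L2 ∧
  ¬ ∃ (c : Comp n) (π : Equiv.Perm (Fin n)),
      c.1 < c.2 ∧ ¬ usedIn L2 c.1 ∧ ¬ usedIn L2 c.2 ∧
      outputs [L1, insert c L2] ⊂ permSet π (outputs [L1, L2])

/-- Vertices of the graph representation of `C`: the comparators of `C`,
tagged with the index of the layer containing them. -/
def Vertex {n : ℕ} (C : Net n) := {p : ℕ × Comp n // p.2 ∈ C.getD p.1 ∅}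

/-- The channel carrying the min output (`b = false`, label 1) or max output
(`b = true`, label 2) of a comparator. -/
def outChan {n : ℕ} (c : Comp n) (b : Bool) : Fin n := if b then c.2 else c.1

/-- An edge with label `b` (1 for min, 2 for max) from comparator `u` to
comparator `v`: the corresponding output of `u` is an input of `v`, i.e. `v`
is the next comparator on that channel. -/
def Edge {n : ℕ} (C : Net n) (b : Bool) (u v : ℕ × Comp n) : Prop :=
  u.1 < v.1 ∧ (outChan u.2 b = v.2.1 ∨ outChan u.2 b = v.2.2) ∧
  ∀ m, u.1 < m → m < v.1 → ¬ usedIn (C.getD m ∅) (outChan u.2 b)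

/-- The graph representations of `C` and `D` are isomorphic: a bijection of
comparators preserving the labeled edges. -/
def GraphIso {n m : ℕ} (C : Net n) (D : Net m) : Prop :=
  ∃ f : Vertex C ≃ Vertex D,
    ∀ (b : Bool) (u v : Vertex C),
      Edge C b u.val v.val ↔ Edge D b (f u).val (f v).val

/-- The graph representation of `C` is connected. -/
def GraphConnected {n : ℕ} (C : Net n) : Prop :=
  ∀ u v : Vertex C,
    Relation.ReflTransGen
      (fun a b : Vertex C => ∃ ℓ : Bool, Edge C ℓ a.val b.val ∨ Edge C ℓ b.val a.val) u v

/-- Reflection of a comparator: `(i,j) ↦ (n-j+1, n-i+1)` (in 1-based terms). -/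
def reflectComp {n : ℕ} (c : Comp n) : Comp n := (c.2.rev, c.1.rev)

def reflectLayer {n : ℕ} (L : Layer n) : Layer n := L.image reflectComp

/-- Reflection `C^R` of a comparator network. -/
def reflect {n : ℕ} (C : Net n) : Net n := C.map reflectLayer

/-- The first layer `F_n = {(2i-1, 2i) : 1 ≤ i ≤ ⌊n/2⌋}` (0-indexed: `(2i, 2i+1)`). -/
def FLayer (n : ℕ) : Layer n :=
  Finset.univ.filter fun c : Comp n => c.1.val % 2 = 0 ∧ c.2.val = c.1.val + 1

/-- The two-layer networks with first layer `F_n`, parametrized by second layer. -/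
def SecondLayers (n : ℕ) := {L : Layer n // IsLayer L}

/-- The number `|R(G_n)|` of equivalence classes of two-layer networks with
first layer `F_n`, under graph isomorphism `≈`. -/
noncomputable def numClasses (n : ℕ) : ℕ :=
  Nat.card (Quot fun L L' : SecondLayers n =>
    GraphIso ([FLayer n, L.val] : Net n) ([FLayer n, L'.val] : Net n))

/-- Redundant two-layer networks with first layer `F_n`. -/
def RedLayers (n : ℕ) := {L : Layer n // IsLayer L ∧ Redundant (FLayer n) L}

/-- The number of equivalence classes of redundant two-layer networks with
first layer `F_n`, under graph isomorphism `≈`. -/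
noncomputable def numRedClasses (n : ℕ) : ℕ :=
  Nat.card (Quot fun L L' : RedLayers n =>
    GraphIso ([FLayer n, L.val] : Net n) ([FLayer n, L'.val] : Net n))

section Aux

variable {n : ℕ}

/-- two comparators of a non-overlapping layer touching a common channel are equal -/
lemma NoOverlap.eq_of_touch {L : Layer n} (hL : NoOverlap L) {c c' : Comp n} {k : Fin n}
    (hc : c ∈ L) (hc' : c' ∈ L) (h : c.1 = k ∨ c.2 = k) (h' : c'.1 = k ∨ c'.2 = k) :
    c = c' := by
  by_contra hne
  obtain ⟨a1, a2, a3, a4⟩ := hL c hc c' hc' hne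
  rcases h with h | h <;> rcases h' with h' | h' <;> simp_all

lemma IsGenLayer.ne_snd_fst {L : Layer n} (hL : IsGenLayer L) {c c' : Comp n}
    (hc : c ∈ L) (hc' : c' ∈ L) : c'.1 ≠ c.2 := by
  intro h
  rcases eq_or_ne c c' with rfl | hne
  · exact hL.1 c hc h
  · exact (hL.2 c hc c' hc' hne).2.2.1 h.symm

lemma run_cons (L : Layer n) (C : Net n) (x : Fin n → Bool) :
    run (L :: C) x = run C (applyLayer L x) := rfl

lemma run_nil (x : Fin n → Bool) : run ([] : Net n) x = x := rfl

lemma applyLayer_min {L : Layer n} (hL : IsGenLayer L) {c : Comp n} (hc : c ∈ L)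
    (x : Fin n → Bool) : applyLayer L x c.1 = (x c.1 && x c.2) := by
  have h1 : ∃ c' ∈ L, c'.1 = c.1 := ⟨c, hc, rfl⟩
  have hch : h1.choose = c := by
    have := h1.choose_spec
    exact hL.2.eq_of_touch this.1 hc (Or.inl this.2) (Or.inl rfl)
  rw [applyLayer, dif_pos h1, hch]

lemma applyLayer_max {L : Layer n} (hL : IsGenLayer L) {c : Comp n} (hc : c ∈ L)
    (x : Fin n → Bool) : applyLayer L x c.2 = (x c.1 || x c.2) := by
  have h1 : ¬ ∃ c' ∈ L, c'.1 = c.2 := by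
    rintro ⟨c', hc', h⟩
    exact hL.ne_snd_fst hc hc' h
  have h2 : ∃ c' ∈ L, c'.2 = c.2 := ⟨c, hc, rfl⟩
  have hch : h2.choose = c := by
    have := h2.choose_spec
    exact hL.2.eq_of_touch this.1 hc (Or.inr this.2) (Or.inr rfl)
  rw [applyLayer, dif_neg h1, dif_pos h2, hch]

lemma applyLayer_not_used {L : Layer n} {k : Fin n} (h : ¬ usedIn L k)
    (x : Fin n → Bool) : applyLayer L x k = x k := by
  have h1 : ¬ ∃ c ∈ L, c.1 = k := fun ⟨c, hc, hk⟩ => h ⟨c, hc, Or.inl hk⟩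
  have h2 : ¬ ∃ c ∈ L, c.2 = k := fun ⟨c, hc, hk⟩ => h ⟨c, hc, Or.inr hk⟩
  rw [applyLayer, dif_neg h1, dif_neg h2]

end Aux
section Aux2

variable {n : ℕ}

lemma permVec_permVec (π τ : Equiv.Perm (Fin n)) (x : Fin n → Bool) :
    permVec π (permVec τ x) = permVec (π * τ) x := by
  funext i
  simp [permVec, Equiv.Perm.mul_def, Equiv.symm_trans_apply]

lemma permVec_symm_permVec (π : Equiv.Perm (Fin n)) (x : Fin n → Bool) :
    permVec π (permVec π.symm x) = x := by
  funext i; simp [permVec]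

lemma mem_permLayer {π : Equiv.Perm (Fin n)} {L : Layer n} {c : Comp n} :
    c ∈ permLayer π L ↔ ∃ a ∈ L, (π a.1, π a.2) = c := by
  simp [permLayer]

lemma permLayer_noOverlap {π : Equiv.Perm (Fin n)} {L : Layer n} (h : NoOverlap L) :
    NoOverlap (permLayer π L) := by
  rintro c hc c' hc' hne
  obtain ⟨a, ha, rfl⟩ := mem_permLayer.mp hc
  obtain ⟨b, hb, rfl⟩ := mem_permLayer.mp hc'
  have hab : a ≠ b := by rintro rfl; exact hne rfl
  obtain ⟨h1, h2, h3, h4⟩ := h a ha b hb hab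
  refine ⟨?_, ?_, ?_, ?_⟩ <;> simp only [] <;>
    intro hh <;> [exact h1 (π.injective hh); exact h2 (π.injective hh);
      exact h3 (π.injective hh); exact h4 (π.injective hh)]

lemma permLayer_isGenLayer {π : Equiv.Perm (Fin n)} {L : Layer n} (h : IsGenLayer L) :
    IsGenLayer (permLayer π L) := by
  refine ⟨?_, permLayer_noOverlap h.2⟩
  rintro c hc
  obtain ⟨a, ha, rfl⟩ := mem_permLayer.mp hc
  exact fun hh => h.1 a ha (π.injective hh)

lemma usedIn_permLayer {π : Equiv.Perm (Fin n)} {L : Layer n} {k : Fin n} :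
    usedIn (permLayer π L) (π k) ↔ usedIn L k := by
  constructor
  · rintro ⟨c, hc, h⟩
    obtain ⟨a, ha, rfl⟩ := mem_permLayer.mp hc
    refine ⟨a, ha, ?_⟩
    rcases h with h | h
    · exact Or.inl (π.injective h)
    · exact Or.inr (π.injective h)
  · rintro ⟨a, ha, h⟩
    refine ⟨(π a.1, π a.2), mem_permLayer.mpr ⟨a, ha, rfl⟩, ?_⟩
    rcases h with h | h
    · exact Or.inl (congrArg π h)
    · exact Or.inr (congrArg π h)

lemma applyLayer_perm {π : Equiv.Perm (Fin n)} {L : Layer n} (hL : IsGenLayer L)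
    (x : Fin n → Bool) :
    applyLayer (permLayer π L) (permVec π x) = permVec π (applyLayer L x) := by
  have hPL := permLayer_isGenLayer (π := π) hL
  funext k
  obtain ⟨k₀, rfl⟩ : ∃ k₀, π k₀ = k := ⟨π.symm k, π.apply_symm_apply k⟩
  have hrhs : permVec π (applyLayer L x) (π k₀) = applyLayer L x k₀ := by
    simp [permVec]
  rw [hrhs]
  by_cases h : usedIn L k₀
  · obtain ⟨c, hc, hk⟩ := h
    have hcm : (π c.1, π c.2) ∈ permLayer π L := mem_permLayer.mpr ⟨c, hc, rfl⟩
    rcases hk with hk | hk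
    · subst hk
      have := applyLayer_min hPL hcm (permVec π x)
      simp only at this
      rw [this, applyLayer_min hL hc]
      simp [permVec]
    · subst hk
      have := applyLayer_max hPL hcm (permVec π x)
      simp only at this
      rw [this, applyLayer_max hL hc]
      simp [permVec]
  · rw [applyLayer_not_used (by rwa [usedIn_permLayer]) , applyLayer_not_used h]
    simp [permVec]

def permNet (π : Equiv.Perm (Fin n)) (C : Net n) : Net n := C.map (permLayer π)

lemma permLayer_permLayer (π τ : Equiv.Perm (Fin n)) (L : Layer n) :
    permLayer π (permLayer τ L) = permLayer (π * τ) L := by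
  simp [permLayer, Finset.image_image]
  rfl

lemma permLayer_one (L : Layer n) : permLayer 1 L = L := by
  simp [permLayer]

lemma permNet_cancel (π : Equiv.Perm (Fin n)) (C : Net n) :
    permNet π (permNet π.symm C) = C := by
  simp [permNet, List.map_map]
  have : (permLayer π ∘ permLayer π.symm) = id := by
    funext L
    simp [permLayer_permLayer, Equiv.Perm.mul_symm, permLayer_one]
  simp [this]

lemma permNet_isGenNet {π : Equiv.Perm (Fin n)} {C : Net n} (h : IsGenNet C) :
    IsGenNet (permNet π C) := by
  intro L hL
  obtain ⟨L', hL', rfl⟩ := List.mem_map.mp hL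
  exact permLayer_isGenLayer (h L' hL')

lemma run_permNet {π : Equiv.Perm (Fin n)} {C : Net n} (hC : IsGenNet C)
    (x : Fin n → Bool) : run (permNet π C) (permVec π x) = permVec π (run C x) := by
  induction C generalizing x with
  | nil => rfl
  | cons L C' ih =>
      have hL : IsGenLayer L := hC L List.mem_cons_self
      have hC' : IsGenNet C' := fun M hM => hC M (List.mem_cons_of_mem _ hM)
      rw [show permNet π (L :: C') = permLayer π L :: permNet π C' from rfl,
        run_cons, run_cons, applyLayer_perm hL, ih hC']

end Aux2
section Aux3

variable {n : ℕ}

lemma bool_le_false {a : Bool} (h : a ≤ false) : a = false := by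
  cases a
  · rfl
  · exact absurd (h rfl) (by simp)

/-- number of `true` entries -/
def countT (x : Fin n → Bool) : ℕ := ∑ i, (if x i then 1 else 0)

lemma countT_permVec (π : Equiv.Perm (Fin n)) (x : Fin n → Bool) :
    countT (permVec π x) = countT x := by
  unfold countT permVec
  exact Equiv.sum_comp π.symm (fun i => if x i then 1 else 0)

lemma countT_lt {x y : Fin n → Bool} (hx : BSorted x) (hy : BSorted y)
    {i : Fin n} (hxi : x i = true) (hyi : y i = false) : countT y < countT x := by
  unfold countT
  apply Finset.sum_lt_sum
  · intro j _
    rcases le_or_gt j i with h | h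
    · have hyj : y j = false := by
        have := hy j i h
        rw [hyi] at this
        exact bool_le_false this
      simp [hyj]
    · have hxj : x j = true := by
        have := hx i j h.le
        rw [hxi] at this
        exact this rfl
      simp only [hxj, if_true]
      split_ifs <;> simp
  · exact ⟨i, Finset.mem_univ i, by simp [hxi, hyi]⟩

lemma BSorted.eq_of_countT {x y : Fin n → Bool} (hx : BSorted x) (hy : BSorted y)
    (h : countT x = countT y) : x = y := by
  funext i
  cases hxi : x i <;> cases hyi : y i
  · rfl
  · exact absurd h (Nat.ne_of_lt (countT_lt hy hx hyi hxi))
  · exact absurd h (Nat.ne_of_gt (countT_lt hx hy hxi hyi))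
  · rfl

lemma applyLayer_sorted {L : Layer n} (hL : IsLayer L) {s : Fin n → Bool}
    (hs : BSorted s) : applyLayer L s = s := by
  funext k
  unfold applyLayer
  split_ifs with h1 h2
  · obtain ⟨hc, hk⟩ := h1.choose_spec
    have hle : s h1.choose.1 ≤ s h1.choose.2 := hs _ _ (hL.1 _ hc).le
    rw [hk] at hle ⊢
    cases hx : s k
    · simp [hx]
    · rw [hx] at hle
      simp [hx, hle rfl]
  · obtain ⟨hc, hk⟩ := h2.choose_spec
    have hle : s h2.choose.1 ≤ s h2.choose.2 := hs _ _ (hL.1 _ hc).le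
    rw [hk] at hle ⊢
    cases hx : s k
    · rw [hx] at hle
      simp [hx, bool_le_false hle]
    · simp [hx]
  · rfl

lemma run_sorted {C : Net n} (hC : IsNet C) {s : Fin n → Bool} (hs : BSorted s) :
    run C s = s := by
  induction C with
  | nil => rfl
  | cons L C' ih =>
      rw [run_cons, applyLayer_sorted (hC L List.mem_cons_self) hs]
      exact ih fun M hM => hC M (List.mem_cons_of_mem _ hM)

end Aux3
section Aux4

variable {n : ℕ}

def orientComp (c : Comp n) : Comp n := if c.2 < c.1 then (c.2, c.1) else c

def orientLayer (L : Layer n) : Layer n := L.image orientComp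

lemma applyLayer_min' {L : Layer n} (hL : IsGenLayer L) {i j : Fin n} (h : (i, j) ∈ L)
    (x : Fin n → Bool) : applyLayer L x i = (x i && x j) := applyLayer_min hL h x

lemma applyLayer_max' {L : Layer n} (hL : IsGenLayer L) {i j : Fin n} (h : (i, j) ∈ L)
    (x : Fin n → Bool) : applyLayer L x j = (x i || x j) := applyLayer_max hL h x

lemma orientComp_pos {c : Comp n} (h : c.2 < c.1) : orientComp c = (c.2, c.1) := if_pos h

lemma orientComp_neg {c : Comp n} (h : ¬ c.2 < c.1) : orientComp c = c := if_neg h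

lemma orient_isLayer {L : Layer n} (hL : IsGenLayer L) : IsLayer (orientLayer L) := by
  constructor
  · intro d hd
    obtain ⟨c, hc, rfl⟩ := Finset.mem_image.mp hd
    by_cases h : c.2 < c.1
    · rw [orientComp_pos h]; exact h
    · rw [orientComp_neg h]
      exact lt_of_le_of_ne (le_of_not_gt h) (hL.1 c hc)
  · intro d hd d' hd' hne
    obtain ⟨a, ha, rfl⟩ := Finset.mem_image.mp hd
    obtain ⟨b, hb, rfl⟩ := Finset.mem_image.mp hd'
    have hab : a ≠ b := by rintro rfl; exact hne rfl
    obtain ⟨h1, h2, h3, h4⟩ := hL.2 a ha b hb hab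
    unfold orientComp
    split_ifs <;>
      first
      | exact ⟨h4, h3, h2, h1⟩
      | exact ⟨h3, h4, h1, h2⟩
      | exact ⟨h2, h1, h4, h3⟩
      | exact ⟨h1, h2, h3, h4⟩

lemma usedIn_orientLayer {L : Layer n} {k : Fin n} :
    usedIn (orientLayer L) k ↔ usedIn L k := by
  constructor
  · rintro ⟨d, hd, h⟩
    obtain ⟨c, hc, rfl⟩ := Finset.mem_image.mp hd
    refine ⟨c, hc, ?_⟩
    by_cases hrev : c.2 < c.1
    · rw [orientComp_pos hrev] at h
      exact h.symm
    · rwa [orientComp_neg hrev] at h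
  · rintro ⟨c, hc, h⟩
    refine ⟨orientComp c, Finset.mem_image_of_mem _ hc, ?_⟩
    by_cases hrev : c.2 < c.1
    · rw [orientComp_pos hrev]
      exact h.symm
    · rwa [orientComp_neg hrev]

noncomputable def swapFun (L : Layer n) (k : Fin n) : Fin n :=
  if h : ∃ c, c ∈ L ∧ c.2 < c.1 ∧ (c.1 = k ∨ c.2 = k) then
    (if h.choose.1 = k then h.choose.2 else h.choose.1)
  else k

lemma swapFun_fst {L : Layer n} (hL : NoOverlap L) {c : Comp n} (hc : c ∈ L)
    (hrev : c.2 < c.1) : swapFun L c.1 = c.2 := by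
  have h : ∃ c', c' ∈ L ∧ c'.2 < c'.1 ∧ (c'.1 = c.1 ∨ c'.2 = c.1) := ⟨c, hc, hrev, Or.inl rfl⟩
  have hch : h.choose = c :=
    hL.eq_of_touch h.choose_spec.1 hc h.choose_spec.2.2 (Or.inl rfl)
  rw [swapFun, dif_pos h, hch, if_pos rfl]

lemma swapFun_snd {L : Layer n} (hL : NoOverlap L) {c : Comp n} (hc : c ∈ L)
    (hrev : c.2 < c.1) : swapFun L c.2 = c.1 := by
  have h : ∃ c', c' ∈ L ∧ c'.2 < c'.1 ∧ (c'.1 = c.2 ∨ c'.2 = c.2) := ⟨c, hc, hrev, Or.inr rfl⟩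
  have hch : h.choose = c :=
    hL.eq_of_touch h.choose_spec.1 hc h.choose_spec.2.2 (Or.inr rfl)
  rw [swapFun, dif_pos h, hch, if_neg (ne_of_gt hrev)]

lemma swapFun_eq_self {L : Layer n} {k : Fin n}
    (h : ¬ ∃ c, c ∈ L ∧ c.2 < c.1 ∧ (c.1 = k ∨ c.2 = k)) : swapFun L k = k := by
  rw [swapFun, dif_neg h]

lemma swapFun_invol {L : Layer n} (hL : NoOverlap L) :
    Function.Involutive (swapFun L) := by
  intro k
  by_cases h : ∃ c, c ∈ L ∧ c.2 < c.1 ∧ (c.1 = k ∨ c.2 = k)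
  · obtain ⟨c, hc, hrev, htouch⟩ := h
    rcases htouch with rfl | rfl
    · rw [swapFun_fst hL hc hrev, swapFun_snd hL hc hrev]
    · rw [swapFun_snd hL hc hrev, swapFun_fst hL hc hrev]
  · rw [swapFun_eq_self h, swapFun_eq_self h]

lemma exists_orient {L : Layer n} (hL : IsGenLayer L) :
    ∃ ρ : Equiv.Perm (Fin n),
      ∀ x, applyLayer L x = permVec ρ (applyLayer (orientLayer L) x) := by
  have hinv := swapFun_invol (L := L) hL.2
  refine ⟨hinv.toPerm, ?_⟩
  have hsymm : ∀ k, (hinv.toPerm).symm k = swapFun L k := fun k => rfl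
  have hO : IsLayer (orientLayer L) := orient_isLayer hL
  have hOg : IsGenLayer (orientLayer L) := ⟨fun c hc => ne_of_lt (hO.1 c hc), hO.2⟩
  intro x
  funext k
  have hperm : permVec hinv.toPerm (applyLayer (orientLayer L) x) k
      = applyLayer (orientLayer L) x (swapFun L k) := by
    rw [permVec, hsymm]
  rw [hperm]
  by_cases hu : usedIn L k
  · obtain ⟨c, hc, hk⟩ := hu
    rcases hk with rfl | rfl
    · by_cases hrev : c.2 < c.1
      · rw [swapFun_fst hL.2 hc hrev, applyLayer_min hL hc]
        have hm : (c.2, c.1) ∈ orientLayer L := by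
          rw [← orientComp_pos hrev]; exact Finset.mem_image_of_mem _ hc
        rw [applyLayer_min' hOg hm, Bool.and_comm]
      · have hnex : ¬ ∃ c', c' ∈ L ∧ c'.2 < c'.1 ∧ (c'.1 = c.1 ∨ c'.2 = c.1) := by
          rintro ⟨c', h1, h2, h3⟩
          have : c' = c := hL.2.eq_of_touch h1 hc h3 (Or.inl rfl)
          subst this
          exact hrev h2
        rw [swapFun_eq_self hnex, applyLayer_min hL hc]
        have hm : (c.1, c.2) ∈ orientLayer L := by
          rw [show ((c.1, c.2) : Comp n) = orientComp c by rw [orientComp_neg hrev]]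
          exact Finset.mem_image_of_mem _ hc
        rw [applyLayer_min' hOg hm]
    · by_cases hrev : c.2 < c.1
      · rw [swapFun_snd hL.2 hc hrev, applyLayer_max hL hc]
        have hm : (c.2, c.1) ∈ orientLayer L := by
          rw [← orientComp_pos hrev]; exact Finset.mem_image_of_mem _ hc
        rw [applyLayer_max' hOg hm, Bool.or_comm]
      · have hnex : ¬ ∃ c', c' ∈ L ∧ c'.2 < c'.1 ∧ (c'.1 = c.2 ∨ c'.2 = c.2) := by
          rintro ⟨c', h1, h2, h3⟩
          have : c' = c := hL.2.eq_of_touch h1 hc h3 (Or.inr rfl)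
          subst this
          exact hrev h2
        rw [swapFun_eq_self hnex, applyLayer_max hL hc]
        have hm : (c.1, c.2) ∈ orientLayer L := by
          rw [show ((c.1, c.2) : Comp n) = orientComp c by rw [orientComp_neg hrev]]
          exact Finset.mem_image_of_mem _ hc
        rw [applyLayer_max' hOg hm]
  · have hnex : ¬ ∃ c', c' ∈ L ∧ c'.2 < c'.1 ∧ (c'.1 = k ∨ c'.2 = k) := by
      rintro ⟨c', h1, _, h3⟩
      exact hu ⟨c', h1, h3⟩
    rw [swapFun_eq_self hnex, applyLayer_not_used hu,
      applyLayer_not_used (fun h => hu (usedIn_orientLayer.mp h))]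

lemma permVec_one (x : Fin n → Bool) : permVec 1 x = x := rfl

lemma untangle_aux : ∀ (k : ℕ) (C : Net n), C.length = k → IsGenNet C →
    ∃ T : Net n, T.length = C.length ∧ IsNet T ∧
      ∃ σ : Equiv.Perm (Fin n), ∀ x, run C x = permVec σ (run T x) := by
  intro k
  induction k with
  | zero =>
      intro C hlen _
      rw [List.length_eq_zero_iff] at hlen
      subst hlen
      exact ⟨[], rfl, fun L h => absurd h List.not_mem_nil, 1, fun x => rfl⟩
  | succ m ih =>
      intro C hlen hC
      match C with
      | L :: C' =>
        have hL : IsGenLayer L := hC L List.mem_cons_self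
        have hC' : IsGenNet C' := fun M hM => hC M (List.mem_cons_of_mem _ hM)
        obtain ⟨ρ, hρ⟩ := exists_orient hL
        have hOL : IsLayer (orientLayer L) := orient_isLayer hL
        have hgen' : IsGenNet (permNet ρ.symm C') := permNet_isGenNet hC'
        have hlen' : (permNet ρ.symm C').length = m := by
          simpa [permNet] using Nat.succ_injective hlen
        obtain ⟨T', hT'len, hT', σ', hσ'⟩ := ih (permNet ρ.symm C') hlen' hgen'
        refine ⟨orientLayer L :: T', ?_, ?_, ρ * σ', ?_⟩
        · simp only [List.length_cons]
          rw [hT'len, hlen']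
          simpa [permNet] using (Nat.succ_injective hlen).symm
        · intro M hM
          rcases List.mem_cons.mp hM with rfl | hM'
          · exact hOL
          · exact hT' M hM'
        · intro x
          have key : run C' (permVec ρ (applyLayer (orientLayer L) x))
              = permVec ρ (run (permNet ρ.symm C') (applyLayer (orientLayer L) x)) := by
            conv_lhs => rw [← permNet_cancel ρ C']
            exact run_permNet hgen' _
          rw [run_cons, hρ x, key, hσ', run_cons, permVec_permVec]
end Aux4
section Aux5

variable {n : ℕ}

lemma IsLayer.isGenLayer {L : Layer n} (h : IsLayer L) : IsGenLayer L :=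
  ⟨fun c hc => ne_of_lt (h.1 c hc), h.2⟩

lemma permLayer_isLayer {π : Equiv.Perm (Fin n)} {L : Layer n} (h : IsLayer L)
    (hπ : ∀ c ∈ L, π c.1 < π c.2) : IsLayer (permLayer π L) := by
  refine ⟨?_, permLayer_noOverlap h.2⟩
  intro c hc
  obtain ⟨a, ha, rfl⟩ := mem_permLayer.mp hc
  exact hπ a ha

lemma second_layer_permutation_fwd {d : ℕ} (π : Equiv.Perm (Fin n))
    (L1 L2 : Layer n) (h1 : IsLayer L1) (h2 : IsLayer L2)
    (hπ1 : permLayer π L1 = L1) (hπ2 : ∀ c ∈ L2, π c.1 < π c.2) :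
    (∃ C : Net n, (L1 :: L2 :: C).length = d ∧ IsSortingNet (L1 :: L2 :: C)) →
    (∃ C' : Net n, (L1 :: permLayer π L2 :: C').length = d ∧
      IsSortingNet (L1 :: permLayer π L2 :: C')) := by
  rintro ⟨C, hlen, hNnet, hNsort⟩
  have hL2' : IsLayer (permLayer π L2) := permLayer_isLayer h2 hπ2
  have hCgen : IsGenNet (permNet π C) :=
    permNet_isGenNet fun M hM =>
      (hNnet M (List.mem_cons_of_mem _ (List.mem_cons_of_mem _ hM))).isGenLayer
  obtain ⟨T, hTlen, hTnet, σ, hσ⟩ := untangle_aux (permNet π C).length (permNet π C) rfl hCgen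
  set N : Net n := L1 :: L2 :: C with hN
  have hNgen : IsGenNet N := fun M hM => (hNnet M hM).isGenLayer
  refine ⟨T, ?_, ?_, ?_⟩
  · simp only [List.length_cons] at hlen ⊢
    rw [hTlen]
    simpa [permNet, hN] using hlen
  · intro M hM
    rcases List.mem_cons.mp hM with rfl | hM'
    · exact h1
    rcases List.mem_cons.mp hM' with rfl | hM''
    · exact hL2'
    · exact hTnet M hM''
  · set S : Net n := L1 :: permLayer π L2 :: T with hS
    have hSnet : IsNet S := by
      intro M hM
      rcases List.mem_cons.mp hM with rfl | hM'
      · exact h1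
      rcases List.mem_cons.mp hM' with rfl | hM''
      · exact hL2'
      · exact hTnet M hM''
    have key : ∀ x, run S x = permVec (σ.symm * π) (run N (permVec π.symm x)) := by
      intro x
      have hGN : permNet π N = L1 :: permLayer π L2 :: permNet π C := by
        simp [permNet, hπ1, hN]
      have hGrun : run (permNet π N) x = permVec π (run N (permVec π.symm x)) := by
        conv_lhs => rw [← permVec_symm_permVec π x]
        exact run_permNet hNgen _
      set w := applyLayer (permLayer π L2) (applyLayer L1 x) with hw
      have e1 : run (permNet π N) x = run (permNet π C) w := by
        rw [hGN, run_cons, run_cons]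
      have e2 : run S x = run T w := by rw [hS, run_cons, run_cons]
      have e3 : run (permNet π C) w = permVec σ (run T w) := hσ w
      rw [e2]
      have : permVec σ (run T w) = permVec π (run N (permVec π.symm x)) := by
        rw [← e3, ← e1, hGrun]
      have h4 : run T w = permVec σ.symm (permVec π (run N (permVec π.symm x))) := by
        rw [← this, permVec_permVec]
        simp [Equiv.Perm.symm_mul, permVec_one]
      rw [h4, permVec_permVec]
    set μ := σ.symm * π with hμ
    have hfix : ∀ t, BSorted t → permVec μ t = t := by
      intro t ht
      have hr : run S t = t := run_sorted hSnet ht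
      have h2' := key t
      set s := run N (permVec π.symm t) with hs'
      have hs : BSorted s := hNsort _
      have hcount : countT s = countT t := by
        have : countT t = countT (permVec μ s) := by rw [← hr, h2']
        rw [countT_permVec] at this
        exact this.symm
      have hst : s = t := hs.eq_of_countT ht hcount
      rw [hst] at h2'
      rw [← h2', hr]
    intro x
    rw [key x, hfix _ (hNsort _)]
    exact hNsort _

end Aux5
section Final

variable {n : ℕ}

lemma permLayer_cancel (π : Equiv.Perm (Fin n)) (L : Layer n) :
    permLayer π.symm (permLayer π L) = L := by
  rw [permLayer_permLayer]
  simp [Equiv.Perm.symm_mul, permLayer_one]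

end Final
/-- Parberry: if `L1` is maximal, `π(L1) = L1` and `π(L2)` is a
layer, then a depth-d sorting network of the form `L1;L2;C` exists iff one of
the form `L1;π(L2);C'` exists. -/
theorem second_layer_permutation {n d : ℕ} (π : Equiv.Perm (Fin n))
    (L1 L2 : Layer n) (h1 : IsLayer L1) (hmax : L1.card = n / 2)
    (h2 : IsLayer L2) (hπ1 : permLayer π L1 = L1)
    (hπ2 : ∀ c ∈ L2, π c.1 < π c.2) :
    (∃ C : Net n, (L1 :: L2 :: C).length = d ∧ IsSortingNet (L1 :: L2 :: C)) ↔
    (∃ C' : Net n, (L1 :: permLayer π L2 :: C').length = d ∧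
      IsSortingNet (L1 :: permLayer π L2 :: C')) := by
  constructor
  · exact second_layer_permutation_fwd π L1 L2 h1 h2 hπ1 hπ2
  · have h2' : IsLayer (permLayer π L2) := permLayer_isLayer h2 hπ2
    have hπ1' : permLayer π.symm L1 = L1 := by
      conv_lhs => rw [← hπ1]
      exact permLayer_cancel π L1
    have hπ2' : ∀ c ∈ permLayer π L2, π.symm c.1 < π.symm c.2 := by
      intro c hc
      obtain ⟨a, ha, rfl⟩ := mem_permLayer.mp hc
      simpa using h2.1 a ha
    have := second_layer_permutation_fwd (d := d) π.symm L1 (permLayer π L2) h1 h2' hπ1' hπ2'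
    rw [permLayer_cancel π L2] at this
    exact this

end SN
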